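/- The kernel K_Br(F_n) of the composed map σ: C(F_n) → B̂r(F_n) (sending p_w to the class of φ_w = p_w - p_{w^{-1}} modulo bounded functions) is spanned by the symmetry relations s_w = p_w + p_{w^{-1}} and the symmetrized extension relations se_w = l_w - r_{w^{-1}}, over all reduced words w. -/

import Mathlib

open List Finset

/-- Number of occurrences of `w` as a contiguous subword of `v`. -/
def occ {α : Type*} [DecidableEq α] (w v : List α) : ℕ :=
  ((List.range (v.length + 1 - w.length)).filter (fun i => decide (w <+: v.drop i))).length

/-- Elementary counting function, with the convention `p_ε(v) = |v|`. -/
def cnt {α : Type*} [DecidableEq α] (w v : List α) : ℚ :=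
  if w = [] then v.length else occ w v

/-- The inverse of a letter of `S̄`: letters are pairs (generator, sign). -/
def invL {n : ℕ} (a : Fin n × Bool) : Fin n × Bool := (a.1, !a.2)

/-- The inverse of a (reduced) word. -/
def invW {n : ℕ} (w : List (Fin n × Bool)) : List (Fin n × Bool) := (w.map invL).reverse

def redB {n : ℕ} : List (Fin n × Bool) → Bool
  | a :: b :: t => decide (b ≠ invL a) && redB (b :: t)
  | _ => true

/-- A word over `S̄` is reduced if no letter is followed by its inverse. -/
def Red {n : ℕ} (w : List (Fin n × Bool)) : Prop := redB w = true

instance {n : ℕ} : DecidablePred (Red (n := n)) := fun _ => instDecidableEqBool _ _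

/-- Left extension relation `l_w = p_w - Σ_{s : sw reduced} p_{sw}`. -/
def lgrp {n : ℕ} (w v : List (Fin n × Bool)) : ℚ :=
  cnt w v - ∑ s ∈ Finset.univ.filter (fun s => Red (s :: w)), cnt (s :: w) v

/-- Right extension relation `r_w = p_w - Σ_{s : ws reduced} p_{ws}`. -/
def rgrp {n : ℕ} (w v : List (Fin n × Bool)) : ℚ :=
  cnt w v - ∑ s ∈ Finset.univ.filter (fun s => Red (w ++ [s])), cnt (w ++ [s]) v

/-- The map `σ₁` sending a function on F_n to `f - f ∘ (·⁻¹)`; on counting functions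
it sends `p_w` to the Brooks quasimorphism `φ_w = p_w - p_{w⁻¹}`. -/
def sig1 {n : ℕ} (f : List (Fin n × Bool) → ℚ) : List (Fin n × Bool) → ℚ :=
  fun v => f v - f (invW v)

/-- The Brooks quasimorphism `φ_w = p_w - p_{w⁻¹}` of a nonempty reduced word. -/
def brooks {n : ℕ} (w v : List (Fin n × Bool)) : ℚ := (occ w v : ℚ) - (occ (invW w) v : ℚ)

/-- The set W̄' of reduced words (including ε) with `w₁ ≠ a₁`, `w₁w₂ ≠ a₂a₁⁻¹`,
`w_fin ≠ a₁⁻¹`, `w_{fin-1}w_fin ≠ a₁a₂⁻¹`. -/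
def WbarAux (n : ℕ) (hn : 2 ≤ n) : Set (List (Fin n × Bool)) :=
  {w | Red w ∧ w.head? ≠ some ((⟨0, by omega⟩ : Fin n), true) ∧
    w.take 2 ≠ [((⟨1, hn⟩ : Fin n), true), ((⟨0, by omega⟩ : Fin n), false)] ∧
    w.getLast? ≠ some ((⟨0, by omega⟩ : Fin n), false) ∧
    w.reverse.take 2 ≠ [((⟨1, hn⟩ : Fin n), false), ((⟨0, by omega⟩ : Fin n), true)]}

/-- The set W̄ = (W̄' ∪ {a₁⁻¹}) \ {a₂}. -/
def Wbar (n : ℕ) (hn : 2 ≤ n) : Set (List (Fin n × Bool)) :=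
  (WbarAux n hn ∪ {[((⟨0, by omega⟩ : Fin n), false)]}) \ {[((⟨1, hn⟩ : Fin n), true)]}

namespace S19

variable {n : ℕ}

@[simp] lemma invL_invL (a : Fin n × Bool) : invL (invL a) = a := by
  simp [invL]

lemma invL_injective : Function.Injective (invL (n := n)) :=
  Function.LeftInverse.injective invL_invL

lemma ne_invL_comm {a b : Fin n × Bool} : a ≠ invL b ↔ b ≠ invL a := by
  constructor <;> · rintro h rfl; simp at h

lemma red_iff {w : List (Fin n × Bool)} :
    Red w ↔ IsChain (fun a b => b ≠ invL a) w := by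
  induction w with
  | nil => simp [Red, redB]
  | cons a t ih =>
    cases t with
    | nil => simp [Red, redB]
    | cons b t' =>
      rw [List.isChain_cons_cons, ← ih]
      show (decide (b ≠ invL a) && redB (b :: t')) = true ↔ _
      simp [Red]

lemma red_of_infix {v w : List (Fin n × Bool)} (h : Red v) (hi : w <:+: v) : Red w :=
  red_iff.2 ((red_iff.1 h).infix hi)

lemma red_of_prefix {v w : List (Fin n × Bool)} (h : Red v) (hi : w <+: v) : Red w :=
  red_of_infix h hi.isInfix

lemma red_of_suffix {v w : List (Fin n × Bool)} (h : Red v) (hi : w <:+ v) : Red w :=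
  red_of_infix h hi.isInfix

lemma red_append_iff {x y : List (Fin n × Bool)} :
    Red (x ++ y) ↔ Red x ∧ Red y ∧
      ∀ a ∈ x.getLast?, ∀ b ∈ y.head?, b ≠ invL a := by
  rw [red_iff, List.isChain_append, ← red_iff, ← red_iff]

lemma red_overlap {x y z : List (Fin n × Bool)} (h1 : Red (x ++ y)) (h2 : Red (y ++ z))
    (hy : y ≠ []) : Red (x ++ (y ++ z)) := by
  rw [red_append_iff] at h1 ⊢
  refine ⟨h1.1, h2, ?_⟩
  intro a ha b hb
  apply h1.2.2 a ha
  rcases y with _ | ⟨c, t⟩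
  · exact absurd rfl hy
  · simpa using hb

@[simp] lemma length_invW (w : List (Fin n × Bool)) : (invW w).length = w.length := by
  simp [invW]

@[simp] lemma invW_invW (w : List (Fin n × Bool)) : invW (invW w) = w := by
  simp [invW, List.map_reverse, List.map_map, Function.comp_def]

@[simp] lemma invW_nil : invW ([] : List (Fin n × Bool)) = [] := rfl

lemma invW_injective : Function.Injective (invW (n := n)) :=
  Function.LeftInverse.injective invW_invW

lemma invW_append (x y : List (Fin n × Bool)) : invW (x ++ y) = invW y ++ invW x := by
  simp [invW]

lemma invW_cons (s : Fin n × Bool) (w : List (Fin n × Bool)) :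
    invW (s :: w) = invW w ++ [invL s] := by
  simp [invW]

lemma invW_singleton (s : Fin n × Bool) : invW [s] = [invL s] := rfl

@[simp] lemma invW_eq_nil_iff {w : List (Fin n × Bool)} : invW w = [] ↔ w = [] := by
  simp [invW]

lemma red_invW_iff {w : List (Fin n × Bool)} : Red (invW w) ↔ Red w := by
  rw [red_iff, red_iff, invW, List.isChain_reverse, List.isChain_map]
  constructor <;> intro h <;> refine h.imp ?_ <;> intro a b hab
  · simp only [flip, invL_invL] at hab
    exact Ne.symm hab
  · simp only [flip, invL_invL]
    exact Ne.symm hab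

lemma red_invW {w : List (Fin n × Bool)} (h : Red w) : Red (invW w) := red_invW_iff.2 h

/-! ### occ basics -/

lemma occ_eq_card {α : Type*} [DecidableEq α] (w v : List α) :
    occ w v = ((Finset.range (v.length + 1 - w.length)).filter
      (fun i => w <+: v.drop i)).card := by
  rfl

lemma prefix_drop_iff {α : Type*} {w v : List α} {i N : ℕ} (hw : w.length = N) :
    w <+: v.drop i ↔ (v.drop i).take N = w := by
  constructor
  · intro h
    rw [← hw]
    exact (List.prefix_iff_eq_take.1 h).symm
  · intro h
    exact h ▸ List.take_prefix _ _

lemma occ_window {α : Type*} [DecidableEq α] {w : List α} {N : ℕ} (hw : w.length = N)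
    (v : List α) :
    occ w v = ∑ i ∈ Finset.range (v.length + 1 - N), (if (v.drop i).take N = w then 1 else 0) := by
  rw [occ_eq_card, Finset.card_filter, hw]
  refine Finset.sum_congr rfl (fun i hi => ?_)
  congr 1
  rw [eq_iff_iff]
  exact prefix_drop_iff hw

lemma invW_take_drop (v : List (Fin n × Bool)) {i N : ℕ} (h : i + N ≤ v.length) :
    ((invW v).drop i).take N = invW ((v.drop (v.length - i - N)).take N) := by
  have hx : (v.map invL).length = v.length := by simp
  rw [invW, List.drop_reverse, List.take_reverse, hx]
  rw [List.length_take, hx, List.drop_take]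
  have h1 : min (v.length - i) v.length = v.length - i := by omega
  have h2 : v.length - i - (v.length - i - N) = N := by omega
  rw [h1, h2, invW, List.map_take, List.map_drop]

lemma occ_invW (w v : List (Fin n × Bool)) : occ w (invW v) = occ (invW w) v := by
  rw [occ_eq_card, occ_eq_card, length_invW, length_invW]
  apply Finset.card_nbij' (fun i => v.length - w.length - i) (fun i => v.length - w.length - i)
  · intro a ha
    simp only [Finset.mem_coe, Finset.mem_filter, Finset.mem_range] at ha ⊢
    obtain ⟨ha1, ha2⟩ := ha
    constructor
    · omega
    · rw [prefix_drop_iff (w := invW w) (N := w.length) (by simp)]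
      rw [prefix_drop_iff rfl] at ha2
      have hle : a + w.length ≤ v.length := by
        by_contra hc
        push_neg at hc
        omega
      rw [invW_take_drop v (by omega)] at ha2
      have : v.length - a - w.length = v.length - w.length - a := by omega
      rw [this] at ha2
      have := congrArg invW ha2
      rwa [invW_invW] at this
  · intro a ha
    simp only [Finset.mem_coe, Finset.mem_filter, Finset.mem_range] at ha ⊢
    obtain ⟨ha1, ha2⟩ := ha
    constructor
    · omega
    · rw [prefix_drop_iff (w := invW w) (N := w.length) (by simp)] at ha2
      rw [prefix_drop_iff rfl]
      have hle : a + w.length ≤ v.length := by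
        by_contra hc
        push_neg at hc
        omega
      rw [invW_take_drop v (by omega)]
      have : v.length - (v.length - w.length - a) - w.length = a := by omega
      rw [this, ha2, invW_invW]
  · intro a ha
    simp only [Finset.mem_coe, Finset.mem_filter, Finset.mem_range] at ha ⊢
    omega
  · intro a ha
    simp only [Finset.mem_coe, Finset.mem_filter, Finset.mem_range] at ha ⊢
    omega

lemma cnt_invW (w v : List (Fin n × Bool)) : cnt w (invW v) = cnt (invW w) v := by
  unfold cnt
  rcases eq_or_ne w [] with rfl | hw
  · simp
  · rw [if_neg hw, if_neg (by simpa using hw), occ_invW]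

/-- reindexing a sum over letters via the involution `invL` -/
lemma sum_invL {M : Type*} [AddCommMonoid M] (p : (Fin n × Bool) → Prop) [DecidablePred p]
    (f : (Fin n × Bool) → M) :
    ∑ s ∈ Finset.univ.filter (fun s => p (invL s)), f (invL s)
      = ∑ s ∈ Finset.univ.filter p, f s := by
  apply Finset.sum_nbij' invL invL
  · intro a ha; simpa using (Finset.mem_filter.1 ha).2
  · intro a ha; simp only [Finset.mem_filter, Finset.mem_univ, true_and, invL_invL]
    exact (Finset.mem_filter.1 ha).2
  · intro a _; simp
  · intro a _; simp
  · intro a _; rfl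

lemma red_cons_iff_snoc {s : Fin n × Bool} {w : List (Fin n × Bool)} :
    Red (s :: w) ↔ Red (invW w ++ [invL s]) := by
  rw [← invW_cons, red_invW_iff]

lemma red_snoc_iff {s : Fin n × Bool} {w : List (Fin n × Bool)} :
    Red (w ++ [s]) ↔ Red (invL s :: invW w) := by
  rw [red_cons_iff_snoc, invW_invW, invL_invL]

lemma rgrp_eq_lgrp_invW (w v : List (Fin n × Bool)) :
    rgrp w v = lgrp (invW w) (invW v) := by
  unfold rgrp lgrp
  rw [cnt_invW, invW_invW]
  congr 1
  rw [← sum_invL (fun s => Red (s :: invW w)) (fun s => cnt (s :: invW w) (invW v))]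
  apply Finset.sum_congr
  · apply Finset.filter_congr
    intro s _
    exact red_snoc_iff
  · intro s _
    rw [cnt_invW, invW_cons, invW_invW, invL_invL]

lemma lgrp_invW (w v : List (Fin n × Bool)) :
    lgrp w (invW v) = rgrp (invW w) v := by
  rw [rgrp_eq_lgrp_invW, invW_invW]

/-- the singleton `[s]` is always reduced -/
lemma red_singleton (s : Fin n × Bool) : Red [s] := rfl

lemma red_nil : Red ([] : List (Fin n × Bool)) := rfl

lemma take_one_drop {v : List (Fin n × Bool)} {i : ℕ} (hi : i < v.length) :
    (v.drop i).take 1 = [v.get ⟨i, hi⟩] := by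
  rw [List.drop_eq_getElem_cons hi]
  rfl

lemma occ_singleton_sum (v : List (Fin n × Bool)) :
    ∑ s : Fin n × Bool, occ [s] v = v.length := by
  have h1 : ∀ s : Fin n × Bool, occ [s] v
      = ∑ i ∈ Finset.range v.length, (if (v.drop i).take 1 = [s] then 1 else 0) :=
    fun s => occ_window rfl v
  rw [Finset.sum_congr rfl (fun s _ => h1 s), Finset.sum_comm]
  have hin : ∀ i ∈ Finset.range v.length,
      (∑ s : Fin n × Bool, if (v.drop i).take 1 = [s] then 1 else 0) = 1 := by
    intro i hi
    rw [Finset.mem_range] at hi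
    rw [Finset.sum_congr rfl (fun s _ => by rw [take_one_drop hi])]
    rw [Finset.sum_eq_single (v.get ⟨i, hi⟩)]
    · simp
    · intro s _ hs
      rw [if_neg (by simp only [List.cons.injEq, and_true]; exact fun h => hs (by simpa using h.symm))]
    · simp
  rw [Finset.sum_congr rfl hin, Finset.sum_const, smul_eq_mul, Finset.card_range, mul_one]

lemma cnt_nil (v : List (Fin n × Bool)) : cnt [] v = v.length := by simp [cnt]

lemma cnt_ne_nil {w : List (Fin n × Bool)} (hw : w ≠ []) (v : List (Fin n × Bool)) :
    cnt w v = (occ w v : ℚ) := by simp [cnt, hw]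

lemma lgrp_nil (v : List (Fin n × Bool)) : lgrp [] v = 0 := by
  unfold lgrp
  rw [cnt_nil]
  have h1 : (Finset.univ.filter (fun s : Fin n × Bool => Red (s :: []))) = Finset.univ := by
    apply Finset.filter_true_of_mem
    intro s _
    rfl
  rw [h1]
  rw [Finset.sum_congr rfl (fun s _ => cnt_ne_nil (by simp) v), ← Nat.cast_sum,
    occ_singleton_sum]
  ring

/-- key extension identity for reduced `v` -/
lemma occ_succ {v : List (Fin n × Bool)} (hv : Red v) {w : List (Fin n × Bool)} (hw : w ≠ []) :
    occ w v = (if v.take w.length = w then 1 else 0)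
      + ∑ s ∈ Finset.univ.filter (fun s => Red (s :: w)), occ (s :: w) v := by
  have hN : 1 ≤ w.length := List.length_pos_iff.2 hw
  have hfil : ∑ s ∈ Finset.univ.filter (fun s => Red (s :: w)), occ (s :: w) v
      = ∑ s : Fin n × Bool, occ (s :: w) v := by
    apply Finset.sum_subset (Finset.subset_univ _)
    intro s _ hs
    simp only [Finset.mem_filter, Finset.mem_univ, true_and] at hs
    rw [occ_eq_card, Finset.card_eq_zero, Finset.filter_eq_empty_iff]
    intro i _ hpre
    exact hs (red_of_infix hv (hpre.isInfix.trans (List.drop_suffix i v).isInfix))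
  have hr : v.length + 1 - (w.length + 1) = v.length - w.length := by omega
  have hwin : ∀ s : Fin n × Bool, occ (s :: w) v = ∑ i ∈ Finset.range (v.length - w.length),
      (if (v.drop i).take (w.length + 1) = s :: w then 1 else 0) := by
    intro s
    rw [occ_window rfl v]
    simp only [List.length_cons]
    rw [hr]
  have hinner : ∀ i ∈ Finset.range (v.length - w.length),
      (∑ s : Fin n × Bool, if (v.drop i).take (w.length + 1) = s :: w then 1 else 0)
      = (if (v.drop (i+1)).take w.length = w then 1 else 0) := by
    intro i hi
    rw [Finset.mem_range] at hi
    have hiv : i < v.length := by omega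
    have hd : (v.drop i).take (w.length + 1) = v.get ⟨i, hiv⟩ :: (v.drop (i+1)).take w.length := by
      rw [List.drop_eq_getElem_cons hiv]
      rfl
    rw [Finset.sum_congr rfl (fun s _ => by rw [hd])]
    rcases eq_or_ne ((v.drop (i+1)).take w.length) w with he | he
    · rw [if_pos he]
      rw [Finset.sum_eq_single (v.get ⟨i, hiv⟩)]
      · rw [if_pos (by rw [he])]
      · intro s _ hs
        rw [if_neg (by simp only [List.cons.injEq]; rintro ⟨h1, -⟩; exact hs (by simp [← h1]))]
      · simp
    · rw [if_neg he]
      apply Finset.sum_eq_zero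
      intro s _
      rw [if_neg (by simp only [List.cons.injEq]; rintro ⟨-, h2⟩; exact he h2)]
  have hS : (∑ s : Fin n × Bool, occ (s :: w) v)
      = ∑ i ∈ Finset.range (v.length - w.length),
          (if (v.drop (i+1)).take w.length = w then 1 else 0) := by
    rw [Finset.sum_congr rfl (fun s _ => hwin s), Finset.sum_comm,
      Finset.sum_congr rfl hinner]
  rw [hfil, hS, occ_window rfl v]
  rcases Nat.lt_or_ge v.length w.length with hlt | hge
  · have h1 : v.length + 1 - w.length = 0 := by omega
    have hne : v.take w.length ≠ w := by
      intro hc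
      have := congrArg List.length hc
      simp at this
      omega
    have h2 : v.length - w.length = 0 := by omega
    rw [h1, h2, if_neg hne]
    simp
  · have hsplit : v.length + 1 - w.length = (v.length - w.length) + 1 := by omega
    rw [hsplit, Finset.sum_range_succ']
    simp only [List.drop_zero]
    omega

lemma lgrp_eq_ind {v : List (Fin n × Bool)} (hv : Red v) (w : List (Fin n × Bool)) :
    lgrp w v = if w ≠ [] ∧ v.take w.length = w then 1 else 0 := by
  rcases eq_or_ne w [] with rfl | hw
  · rw [lgrp_nil]
    simp
  · unfold lgrp
    rw [Finset.sum_congr rfl (fun s _ => cnt_ne_nil (by simp) v), ← Nat.cast_sum]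
    rw [cnt_ne_nil hw, occ_succ hv hw]
    push_cast
    rcases eq_or_ne (v.take w.length) w with he | he
    · rw [if_pos he, if_pos ⟨hw, he⟩]
      ring
    · rw [if_neg he, if_neg (by tauto)]
      ring

lemma abs_lgrp_le {v : List (Fin n × Bool)} (hv : Red v) (w : List (Fin n × Bool)) :
    |lgrp w v| ≤ 1 := by
  rw [lgrp_eq_ind hv]
  split <;> norm_num

lemma abs_rgrp_le {v : List (Fin n × Bool)} (hv : Red v) (w : List (Fin n × Bool)) :
    |rgrp w v| ≤ 1 := by
  rw [rgrp_eq_lgrp_invW]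
  exact abs_lgrp_le (red_invW hv) _

/-! ### the generator set and its span -/

/-- the set of generators in the statement -/
def Gens (n : ℕ) : Set (List (Fin n × Bool) → ℚ) :=
  ({g | ∃ w, Red w ∧ g = fun v => cnt w v + cnt (invW w) v} ∪
   {g | ∃ w, Red w ∧ g = fun v => lgrp w v - rgrp (invW w) v})

lemma sum_snoc_reindex (w : List (Fin n × Bool)) (v : List (Fin n × Bool)) :
    ∑ s ∈ Finset.univ.filter (fun s => Red (s :: w)), cnt (invW (s :: w)) v
    = ∑ t ∈ Finset.univ.filter (fun t => Red (invW w ++ [t])), cnt (invW w ++ [t]) v := by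
  rw [← sum_invL (fun t => Red (invW w ++ [t])) (fun t => cnt (invW w ++ [t]) v)]
  apply Finset.sum_congr
  · apply Finset.filter_congr
    intro s _
    exact red_cons_iff_snoc
  · intro s _
    rw [invW_cons]

lemma two_lgrp (w v : List (Fin n × Bool)) :
    2 * lgrp w v = ((cnt w v + cnt (invW w) v)
      - ∑ s ∈ Finset.univ.filter (fun s => Red (s :: w)),
          (cnt (s :: w) v + cnt (invW (s :: w)) v))
      + (lgrp w v - rgrp (invW w) v) := by
  rw [Finset.sum_add_distrib, sum_snoc_reindex]
  unfold lgrp rgrp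
  ring

lemma lgrp_mem_span {w : List (Fin n × Bool)} (hw : Red w) :
    lgrp w ∈ Submodule.span ℚ (Gens n) := by
  have hfun : lgrp w =
      ((2⁻¹ : ℚ) • ((fun v => cnt w v + cnt (invW w) v)
        - ∑ s ∈ Finset.univ.filter (fun s => Red (s :: w)),
            (fun v => cnt (s :: w) v + cnt (invW (s :: w)) v))
      + (2⁻¹ : ℚ) • (fun v => lgrp w v - rgrp (invW w) v)) := by
    funext v
    have h2 := two_lgrp w v
    simp only [Pi.add_apply, Pi.smul_apply, Pi.sub_apply, Finset.sum_apply, smul_eq_mul]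
    linarith
  rw [hfun]
  apply Submodule.add_mem
  · apply Submodule.smul_mem
    apply Submodule.sub_mem
    · exact Submodule.subset_span (Or.inl ⟨w, hw, rfl⟩)
    · apply Submodule.sum_mem
      intro s hs
      simp only [Finset.mem_filter, Finset.mem_univ, true_and] at hs
      exact Submodule.subset_span (Or.inl ⟨s :: w, hs, rfl⟩)
  · exact Submodule.smul_mem _ _ (Submodule.subset_span (Or.inr ⟨w, hw, rfl⟩))

lemma rgrp_mem_span {w : List (Fin n × Bool)} (hw : Red w) :
    rgrp w ∈ Submodule.span ℚ (Gens n) := by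
  have hfun : rgrp w = lgrp (invW w) - (fun v => lgrp (invW w) v - rgrp (invW (invW w)) v) := by
    funext v
    simp only [Pi.sub_apply, invW_invW]
    ring
  rw [hfun]
  exact Submodule.sub_mem _ (lgrp_mem_span (red_invW hw))
    (Submodule.subset_span (Or.inr ⟨invW w, red_invW hw, rfl⟩))

/-! ### bounded functions on reduced words -/

/-- the submodule of functions bounded on reduced words -/
def Bdd (n : ℕ) : Submodule ℚ (List (Fin n × Bool) → ℚ) where
  carrier := {f | ∃ C : ℚ, ∀ v, Red v → |f v| ≤ C}
  add_mem' := by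
    rintro f g ⟨C, hC⟩ ⟨D, hD⟩
    exact ⟨C + D, fun v hv => (abs_add_le _ _).trans (add_le_add (hC v hv) (hD v hv))⟩
  zero_mem' := ⟨0, fun v _ => by simp⟩
  smul_mem' := by
    rintro c f ⟨C, hC⟩
    exact ⟨|c| * C, fun v hv => by
      rw [Pi.smul_apply, smul_eq_mul, abs_mul]
      exact mul_le_mul_of_nonneg_left (hC v hv) (abs_nonneg c)⟩

lemma lgrp_mem_Bdd (w : List (Fin n × Bool)) : lgrp w ∈ Bdd n :=
  ⟨1, fun v hv => abs_lgrp_le hv w⟩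

lemma rgrp_mem_Bdd (w : List (Fin n × Bool)) : rgrp w ∈ Bdd n :=
  ⟨1, fun v hv => abs_rgrp_le hv w⟩

/-! ### representation of span elements by word sums -/

lemma span_cnt_rep {Q : List (Fin n × Bool) → Prop} {f : List (Fin n × Bool) → ℚ}
    (hf : f ∈ Submodule.span ℚ {g : List (Fin n × Bool) → ℚ | ∃ w, Q w ∧ g = cnt w}) :
    ∃ (F : Finset (List (Fin n × Bool))) (c : List (Fin n × Bool) → ℚ),
      (∀ w ∈ F, Q w) ∧ f = fun v => ∑ w ∈ F, c w * cnt w v := by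
  induction hf using Submodule.span_induction with
  | mem g hg =>
    obtain ⟨w, hw, rfl⟩ := hg
    exact ⟨{w}, fun _ => 1, by simpa using hw, by funext v; simp⟩
  | zero => exact ⟨∅, 0, by simp, by funext v; simp⟩
  | add g h _ _ ihg ihh =>
    obtain ⟨F₁, c₁, hF₁, rfl⟩ := ihg
    obtain ⟨F₂, c₂, hF₂, rfl⟩ := ihh
    refine ⟨F₁ ∪ F₂,
      (fun w => (if w ∈ F₁ then c₁ w else 0) + (if w ∈ F₂ then c₂ w else 0)), ?_, ?_⟩
    · intro w hw
      rcases Finset.mem_union.1 hw with h | h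
      · exact hF₁ w h
      · exact hF₂ w h
    · funext v
      simp only [Pi.add_apply, add_mul, Finset.sum_add_distrib, ite_mul, zero_mul]
      congr 1
      · rw [Finset.sum_ite_mem, Finset.union_inter_cancel_left]
      · rw [Finset.sum_ite_mem, Finset.union_inter_cancel_right]
  | smul a g _ ihg =>
    obtain ⟨F, c, hF, rfl⟩ := ihg
    refine ⟨F, fun w => a * c w, hF, ?_⟩
    funext v
    simp [Finset.mul_sum, mul_assoc]

/-! ### backward direction -/

/-- the span of the elementary counting functions -/
def SpanC (n : ℕ) : Submodule ℚ (List (Fin n × Bool) → ℚ) :=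
  Submodule.span ℚ {g : List (Fin n × Bool) → ℚ | ∃ w, Red w ∧ g = cnt w}

lemma cnt_mem_SpanC {w : List (Fin n × Bool)} (hw : Red w) : cnt w ∈ SpanC n :=
  Submodule.subset_span ⟨w, hw, rfl⟩

lemma lgrp_mem_SpanC {w : List (Fin n × Bool)} (hw : Red w) : lgrp w ∈ SpanC n := by
  have hfun : lgrp w = cnt w - ∑ s ∈ Finset.univ.filter (fun s => Red (s :: w)),
      cnt (s :: w) := by
    funext v
    simp only [Pi.sub_apply, Finset.sum_apply]
    rfl
  rw [hfun]
  refine Submodule.sub_mem _ (cnt_mem_SpanC hw) (Submodule.sum_mem _ fun s hs => ?_)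
  simp only [Finset.mem_filter, Finset.mem_univ, true_and] at hs
  exact cnt_mem_SpanC hs

lemma rgrp_mem_SpanC {w : List (Fin n × Bool)} (hw : Red w) : rgrp w ∈ SpanC n := by
  have hfun : rgrp w = cnt w - ∑ s ∈ Finset.univ.filter (fun s => Red (w ++ [s])),
      cnt (w ++ [s]) := by
    funext v
    simp only [Pi.sub_apply, Finset.sum_apply]
    rfl
  rw [hfun]
  refine Submodule.sub_mem _ (cnt_mem_SpanC hw) (Submodule.sum_mem _ fun s hs => ?_)
  simp only [Finset.mem_filter, Finset.mem_univ, true_and] at hs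
  exact cnt_mem_SpanC hs

lemma gens_subset_SpanC : Gens n ⊆ (SpanC n : Set (List (Fin n × Bool) → ℚ)) := by
  rintro g (⟨w, hw, rfl⟩ | ⟨w, hw, rfl⟩)
  · have : (fun v => cnt w v + cnt (invW w) v) = cnt w + cnt (invW w) := rfl
    rw [this]
    exact Submodule.add_mem _ (cnt_mem_SpanC hw) (cnt_mem_SpanC (red_invW hw))
  · have : (fun v => lgrp w v - rgrp (invW w) v) = lgrp w - rgrp (invW w) := rfl
    rw [this]
    exact Submodule.sub_mem _ (lgrp_mem_SpanC hw) (rgrp_mem_SpanC (red_invW hw))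

/-- functions whose antisymmetrization is bounded on reduced words -/
def SigBdd (n : ℕ) : Submodule ℚ (List (Fin n × Bool) → ℚ) where
  carrier := {f | ∃ C : ℚ, ∀ v, Red v → |sig1 f v| ≤ C}
  add_mem' := by
    rintro f g ⟨C, hC⟩ ⟨D, hD⟩
    refine ⟨C + D, fun v hv => ?_⟩
    have : sig1 (f + g) v = sig1 f v + sig1 g v := by
      simp only [sig1, Pi.add_apply]
      ring
    rw [this]
    exact (abs_add_le _ _).trans (add_le_add (hC v hv) (hD v hv))
  zero_mem' := ⟨0, fun v _ => by simp [sig1]⟩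
  smul_mem' := by
    rintro c f ⟨C, hC⟩
    refine ⟨|c| * C, fun v hv => ?_⟩
    have : sig1 (c • f) v = c * sig1 f v := by
      simp only [sig1, Pi.smul_apply, smul_eq_mul]
      ring
    rw [this, abs_mul]
    exact mul_le_mul_of_nonneg_left (hC v hv) (abs_nonneg c)

lemma sig1_sym (w : List (Fin n × Bool)) (v : List (Fin n × Bool)) :
    sig1 (fun v => cnt w v + cnt (invW w) v) v = 0 := by
  simp only [sig1, cnt_invW, invW_invW]
  ring

lemma sig1_se (w : List (Fin n × Bool)) (v : List (Fin n × Bool)) :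
    sig1 (fun v => lgrp w v - rgrp (invW w) v) v
      = 2 * (lgrp w v - rgrp (invW w) v) := by
  simp only [sig1, lgrp_invW]
  rw [rgrp_eq_lgrp_invW (invW w) (invW v), invW_invW, invW_invW]
  ring

lemma gens_subset_SigBdd : Gens n ⊆ (SigBdd n : Set (List (Fin n × Bool) → ℚ)) := by
  rintro g (⟨w, hw, rfl⟩ | ⟨w, hw, rfl⟩)
  · exact ⟨0, fun v _ => by rw [sig1_sym]; simp⟩
  · refine ⟨4, fun v hv => ?_⟩
    rw [sig1_se, abs_mul, abs_two]
    have h1 := abs_lgrp_le hv w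
    have h2 := abs_rgrp_le hv (invW w)
    have h3 : |lgrp w v - rgrp (invW w) v| ≤ 2 := (abs_sub _ _).trans (by linarith)
    linarith

lemma backward_dir {f : List (Fin n × Bool) → ℚ}
    (hf : f ∈ Submodule.span ℚ (Gens n)) :
    f ∈ SpanC n ∧ ∃ C : ℚ, ∀ v, Red v → |sig1 f v| ≤ C := by
  constructor
  · exact Submodule.span_le.2 gens_subset_SpanC hf
  · exact Submodule.span_le.2 gens_subset_SigBdd hf

/-! ### homogenization -/

/-- generators for homogenization: left relations and counting functions of words
of a fixed length `N` -/
def LP (n N : ℕ) : Set (List (Fin n × Bool) → ℚ) :=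
  {h | ∃ u, Red u ∧ h = lgrp u} ∪ {h | ∃ u, Red u ∧ u.length = N ∧ h = cnt u}

lemma cnt_mem_homog {N : ℕ} :
    ∀ (k : ℕ) (w : List (Fin n × Bool)), Red w → w.length + k = N →
      cnt w ∈ Submodule.span ℚ (LP n N) := by
  intro k
  induction k with
  | zero =>
    intro w hw hlen
    exact Submodule.subset_span (Or.inr ⟨w, hw, by omega, rfl⟩)
  | succ k ih =>
    intro w hw hlen
    have hfun : cnt w = lgrp w + ∑ s ∈ Finset.univ.filter (fun s => Red (s :: w)),
        cnt (s :: w) := by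
      funext v
      simp only [Pi.add_apply, Finset.sum_apply, lgrp]
      ring
    rw [hfun]
    refine Submodule.add_mem _ (Submodule.subset_span (Or.inl ⟨w, hw, rfl⟩))
      (Submodule.sum_mem _ fun s hs => ?_)
    simp only [Finset.mem_filter, Finset.mem_univ, true_and] at hs
    exact ih (s :: w) hs (by simp only [List.length_cons]; omega)

/-! ### window sums -/

/-- sum of a coefficient function over all length-`N` windows of `v` -/
def WS (D : List (Fin n × Bool) → ℚ) (N : ℕ) (v : List (Fin n × Bool)) : ℚ :=
  ∑ i ∈ Finset.range (v.length + 1 - N), D ((v.drop i).take N)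

/-- last `N-1` letters -/
def sfx (N : ℕ) (v : List (Fin n × Bool)) : List (Fin n × Bool) :=
  v.drop (v.length - (N - 1))

/-- first `N-1` letters -/
def pfx (N : ℕ) (v : List (Fin n × Bool)) : List (Fin n × Bool) :=
  v.take (N - 1)

lemma length_sfx {N : ℕ} {v : List (Fin n × Bool)} (h : N - 1 ≤ v.length) :
    (sfx N v).length = N - 1 := by
  simp [sfx]
  omega

lemma length_pfx {N : ℕ} {v : List (Fin n × Bool)} (h : N - 1 ≤ v.length) :
    (pfx N v).length = N - 1 := by
  simp [pfx]
  omega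

lemma sfx_append {N : ℕ} (x : List (Fin n × Bool)) {y : List (Fin n × Bool)}
    (h : N - 1 ≤ y.length) : sfx N (x ++ y) = sfx N y := by
  unfold sfx
  rw [List.length_append,
    show x.length + y.length - (N-1) = x.length + (y.length - (N-1)) from by omega,
    List.drop_length_add_append]

lemma pfx_append {N : ℕ} {x : List (Fin n × Bool)} (y : List (Fin n × Bool))
    (h : N - 1 ≤ x.length) : pfx N (x ++ y) = pfx N x := by
  unfold pfx
  rw [List.take_append_of_le_length h]

lemma sfx_suffix (N : ℕ) (v : List (Fin n × Bool)) : sfx N v <:+ v :=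
  List.drop_suffix _ _

lemma pfx_prefix (N : ℕ) (v : List (Fin n × Bool)) : pfx N v <+: v :=
  List.take_prefix _ _

lemma sum_range_add' (f : ℕ → ℚ) (a b : ℕ) :
    ∑ i ∈ Finset.range (a + b), f i
      = ∑ i ∈ Finset.range a, f i + ∑ i ∈ Finset.range b, f (a + i) := by
  induction b with
  | zero => simp
  | succ b ih =>
    rw [show a + (b+1) = (a+b)+1 from by omega, Finset.sum_range_succ, ih,
      Finset.sum_range_succ, add_assoc]

lemma WS_short {D : List (Fin n × Bool) → ℚ} {N : ℕ} {v : List (Fin n × Bool)}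
    (h : v.length < N) : WS D N v = 0 := by
  unfold WS
  rw [show v.length + 1 - N = 0 from by omega]
  simp

lemma WS_single {D : List (Fin n × Bool) → ℚ} {N : ℕ} (hN : 1 ≤ N)
    {w : List (Fin n × Bool)} (hw : w.length = N) : WS D N w = D w := by
  unfold WS
  rw [show w.length + 1 - N = 1 from by omega]
  simp [List.take_of_length_le hw.le]

/-- the splitting of the window sum of a concatenation -/
lemma WS_append {D : List (Fin n × Bool) → ℚ} {N : ℕ} (hN : 1 ≤ N)
    {x y : List (Fin n × Bool)} (hx : N - 1 ≤ x.length) (hy : N - 1 ≤ y.length) :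
    WS D N (x ++ y) = WS D N x + WS D N y + WS D N (sfx N x ++ pfx N y) := by
  have hsl : (sfx N x).length = N - 1 := length_sfx hx
  have hpl : (pfx N y).length = N - 1 := length_pfx hy
  unfold WS
  rw [List.length_append,
    show x.length + y.length + 1 - N
      = (x.length + 1 - N) + ((N - 1) + (y.length + 1 - N)) from by omega,
    sum_range_add', sum_range_add']
  have p1 : ∑ i ∈ Finset.range (x.length + 1 - N), D (((x ++ y).drop i).take N)
      = ∑ i ∈ Finset.range (x.length + 1 - N), D ((x.drop i).take N) := by
    refine Finset.sum_congr rfl fun i hi => ?_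
    rw [Finset.mem_range] at hi
    rw [List.drop_append_of_le_length (by omega),
      List.take_append_of_le_length (by rw [List.length_drop]; omega)]
  have p2 : ∑ j ∈ Finset.range (N - 1),
        D (((x ++ y).drop ((x.length + 1 - N) + j)).take N)
      = ∑ j ∈ Finset.range ((sfx N x ++ pfx N y).length + 1 - N),
        D (((sfx N x ++ pfx N y).drop j).take N) := by
    rw [List.length_append, hsl, hpl, show (N-1) + (N-1) + 1 - N = N - 1 from by omega]
    refine Finset.sum_congr rfl fun j hj => ?_
    rw [Finset.mem_range] at hj
    congr 1
    rw [List.drop_append_of_le_length (by omega)]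
    rw [List.drop_append_of_le_length (by omega)]
    unfold sfx
    have e1 : (x.drop (x.length - (N-1))).drop j = x.drop (x.length + 1 - N + j) := by
      rw [List.drop_drop]
      congr 1
      omega
    rw [e1]
    set z := x.drop (x.length + 1 - N + j) with hzdef
    have hz : z.length = N - 1 - j := by
      rw [hzdef, List.length_drop]
      omega
    rw [List.take_append, List.take_append]
    congr 1
    unfold pfx
    rw [List.take_take]
    congr 1
    omega
  have p3 : ∑ j ∈ Finset.range (y.length + 1 - N),
        D (((x ++ y).drop ((x.length + 1 - N) + ((N-1) + j))).take N)
      = ∑ j ∈ Finset.range (y.length + 1 - N), D ((y.drop j).take N) := by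
    refine Finset.sum_congr rfl fun j hj => ?_
    rw [show (x.length + 1 - N) + ((N-1) + j) = x.length + j from by omega,
      List.drop_length_add_append]
  rw [p1, p2, p3]
  ring

/-- appending one letter adds one window -/
lemma WS_snoc {D : List (Fin n × Bool) → ℚ} {N : ℕ} (hN : 1 ≤ N)
    {x : List (Fin n × Bool)} (hx : N - 1 ≤ x.length) (a : Fin n × Bool) :
    WS D N (x ++ [a]) = WS D N x + D (sfx N x ++ [a]) := by
  unfold WS
  rw [List.length_append, List.length_singleton,
    show x.length + 1 + 1 - N = (x.length + 1 - N) + 1 from by omega,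
    Finset.sum_range_succ]
  congr 1
  · refine Finset.sum_congr rfl fun i hi => ?_
    rw [Finset.mem_range] at hi
    rw [List.drop_append_of_le_length (by omega),
      List.take_append_of_le_length (by rw [List.length_drop]; omega)]
  · congr 1
    rw [List.drop_append_of_le_length (by omega)]
    unfold sfx
    rw [show x.length + 1 - N = x.length - (N-1) from by omega]
    apply List.take_of_length_le
    rw [List.length_append, List.length_drop, List.length_singleton]
    omega

/-! ### powers and the cycle relation -/

/-- `k`-fold concatenation -/
def npw (t : List (Fin n × Bool)) : ℕ → List (Fin n × Bool)
  | 0 => []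
  | k + 1 => t ++ npw t k

lemma npw_succ (t : List (Fin n × Bool)) (k : ℕ) : npw t (k+1) = t ++ npw t k := rfl

lemma npw_comm (t : List (Fin n × Bool)) (k : ℕ) : t ++ npw t k = npw t k ++ t := by
  induction k with
  | zero => simp [npw]
  | succ k ih => rw [npw_succ, List.append_assoc, ih]

lemma npw_succ' (t : List (Fin n × Bool)) (k : ℕ) : npw t (k+1) = npw t k ++ t := by
  rw [npw_succ, npw_comm]

lemma length_npw (t : List (Fin n × Bool)) (k : ℕ) : (npw t k).length = k * t.length := by
  induction k with
  | zero => simp [npw]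
  | succ k ih => rw [npw_succ, List.length_append, ih]; ring

lemma red_npw {t : List (Fin n × Bool)} (ht : Red t) (htt : Red (t ++ t)) (ht0 : t ≠ []) :
    ∀ k, Red (npw t (k+1)) := by
  intro k
  induction k with
  | zero => simpa [npw] using ht
  | succ k ih =>
    rw [npw_succ]
    have h := red_overlap (x := t) (y := t) (z := npw t k) htt ?_ ht0
    · simpa [npw_succ] using h
    · rw [← npw_succ]; exact ih

lemma sfx_npw {N : ℕ} {t : List (Fin n × Bool)} (h : N - 1 ≤ t.length) (k : ℕ) :
    sfx N (npw t (k+1)) = sfx N t := by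
  rw [npw_succ']
  exact sfx_append _ h

lemma pfx_npw {N : ℕ} {t : List (Fin n × Bool)} (h : N - 1 ≤ t.length) (k : ℕ) :
    pfx N (npw t (k+1)) = pfx N t := by
  rw [npw_succ]
  exact pfx_append _ h

lemma WS_npw {D : List (Fin n × Bool) → ℚ} {N : ℕ} (hN : 1 ≤ N)
    {t : List (Fin n × Bool)} (ht : N - 1 ≤ t.length) (k : ℕ) :
    WS D N (npw t (k+1)) = (k+1 : ℚ) * WS D N t + (k : ℚ) * WS D N (sfx N t ++ pfx N t) := by
  induction k with
  | zero => simp [npw]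
  | succ k ih =>
    rw [npw_succ' t (k+1), WS_append hN (by rw [length_npw]; nlinarith) ht,
      ih, sfx_npw ht]
    push_cast
    ring

/-- cycle relation : the window sum along a cyclically reduced word plus the wrap-around
term vanishes -/
lemma cycle_rel {D : List (Fin n × Bool) → ℚ} {N : ℕ} (hN : 1 ≤ N) {C : ℚ}
    (hb : ∀ v, Red v → |WS D N v| ≤ C)
    {t : List (Fin n × Bool)} (ht : Red t) (htt : Red (t ++ t)) (ht0 : t ≠ [])
    (htl : N - 1 ≤ t.length) :
    WS D N t + WS D N (sfx N t ++ pfx N t) = 0 := by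
  by_contra ha
  set a := WS D N t + WS D N (sfx N t ++ pfx N t) with hadef
  set E := WS D N (sfx N t ++ pfx N t) with hEdef
  have hapos : 0 < |a| := abs_pos.2 ha
  obtain ⟨k, hk⟩ := exists_nat_gt ((C + |E|) / |a|)
  have hklarge : C + |E| < (k + 1 : ℚ) * |a| := by
    have h1 : (C + |E|) / |a| < k + 1 := by
      calc (C + |E|) / |a| < (k : ℚ) := hk
        _ ≤ k + 1 := by linarith
    calc C + |E| = ((C + |E|) / |a|) * |a| := by field_simp
      _ < (k + 1 : ℚ) * |a| := by
          apply mul_lt_mul_of_pos_right h1 hapos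
  have hred := red_npw ht htt ht0 k
  have hval := hb _ hred
  rw [WS_npw hN htl k] at hval
  have hform : (k+1 : ℚ) * WS D N t + (k : ℚ) * E = (k+1 : ℚ) * a - E := by
    rw [hadef, hEdef]
    ring
  rw [hform] at hval
  have habs : (k+1 : ℚ) * |a| - |E| ≤ |(k + 1 : ℚ) * a - E| := by
    calc (k+1 : ℚ) * |a| - |E| = |(k+1 : ℚ) * a| - |E| := by
          rw [abs_mul, abs_of_nonneg (by positivity : (0:ℚ) ≤ (k:ℚ)+1)]
      _ ≤ |(k + 1 : ℚ) * a - E| := by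
          have := abs_sub_abs_le_abs_sub ((k+1 : ℚ) * a) E
          linarith
  linarith

/-! ### connectors -/

lemma exists_ne_pair (hn : 2 ≤ n) (a b : Fin n × Bool) :
    ∃ c : Fin n × Bool, c ≠ a ∧ c ≠ b := by
  by_contra h
  push_neg at h
  have hsub : (Finset.univ : Finset (Fin n × Bool)) ⊆ {a, b} := by
    intro c _
    rcases eq_or_ne c a with rfl | hca
    · simp
    · simp [h c hca]
  have h1 : Fintype.card (Fin n × Bool) ≤ ({a, b} : Finset _).card := by
    rw [← Finset.card_univ]
    exact Finset.card_le_card hsub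
  have h2 : ({a, b} : Finset (Fin n × Bool)).card ≤ 2 := by
    apply (Finset.card_insert_le _ _).trans
    simp
  have h3 : Fintype.card (Fin n × Bool) = 2 * n := by
    simp [Fintype.card_prod]
    ring
  omega

noncomputable def pick (hn : 2 ≤ n) (a b : Fin n × Bool) : Fin n × Bool :=
  (exists_ne_pair hn a b).choose

lemma pick_spec (hn : 2 ≤ n) (a b : Fin n × Bool) :
    pick hn a b ≠ a ∧ pick hn a b ≠ b :=
  (exists_ne_pair hn a b).choose_spec

/-- the default letter -/
def dL (hn : 2 ≤ n) : Fin n × Bool := ((⟨0, by omega⟩ : Fin n), true)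

/-- a connecting word of length 2 -/
noncomputable def KK (hn : 2 ≤ n) (o₁ o₂ : Option (Fin n × Bool)) :
    List (Fin n × Bool) :=
  [pick hn (invL (o₁.getD (dL hn))) (invL (o₁.getD (dL hn))),
   pick hn (invL (pick hn (invL (o₁.getD (dL hn))) (invL (o₁.getD (dL hn)))))
     (invL (o₂.getD (dL hn)))]

lemma KK_ne_nil (hn : 2 ≤ n) (o₁ o₂ : Option (Fin n × Bool)) : KK hn o₁ o₂ ≠ [] := by
  simp [KK]

lemma KK_length (hn : 2 ≤ n) (o₁ o₂ : Option (Fin n × Bool)) : (KK hn o₁ o₂).length = 2 := by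
  simp [KK]

lemma red_KK (hn : 2 ≤ n) (o₁ o₂ : Option (Fin n × Bool)) : Red (KK hn o₁ o₂) := by
  rw [red_iff, KK]
  refine List.isChain_cons_cons.2 ⟨?_, List.isChain_singleton _⟩
  exact (pick_spec hn _ _).1

lemma red_KK_left (hn : 2 ≤ n) {x : List (Fin n × Bool)} (hx : Red x)
    (o₂ : Option (Fin n × Bool)) : Red (x ++ KK hn x.getLast? o₂) := by
  rw [red_append_iff]
  refine ⟨hx, red_KK hn _ _, ?_⟩
  intro a ha b hb
  rw [Option.mem_def] at ha
  simp only [KK, List.head?_cons, Option.mem_def, Option.some.injEq] at hb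
  subst hb
  rw [ha]
  simp only [Option.getD_some]
  exact (pick_spec hn (invL a) (invL a)).1

lemma red_KK_right (hn : 2 ≤ n) (o₁ : Option (Fin n × Bool)) {y : List (Fin n × Bool)}
    (hy : Red y) : Red (KK hn o₁ y.head? ++ y) := by
  rw [red_append_iff]
  refine ⟨red_KK hn _ _, hy, ?_⟩
  intro a ha b hb
  rw [Option.mem_def] at hb
  simp only [KK, List.getLast?_cons_cons, List.getLast?_singleton, Option.mem_def,
    Option.some.injEq] at ha
  subst ha
  have := (pick_spec hn (invL (pick hn (invL (o₁.getD (dL hn))) (invL (o₁.getD (dL hn)))))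
    (invL ((y.head?).getD (dL hn)))).2
  rw [hb]
  rw [hb] at this
  simp only [Option.getD_some] at this ⊢
  exact ne_invL_comm.1 this

lemma red_glue (hn : 2 ≤ n) {x y : List (Fin n × Bool)} (hx : Red x) (hy : Red y) :
    Red (x ++ (KK hn x.getLast? y.head? ++ y)) :=
  red_overlap (red_KK_left hn hx _) (red_KK_right hn _ hy) (KK_ne_nil hn _ _)

/-! ### base words -/

lemma red_replicate {a : Fin n × Bool} (ha : a ≠ invL a) (m : ℕ) :
    Red (List.replicate m a) := by
  rw [red_iff]
  induction m with
  | zero => simp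
  | succ m ih =>
    cases m with
    | zero => simp
    | succ m =>
      rw [List.replicate_succ, List.replicate_succ]
      rw [List.replicate_succ] at ih
      exact List.isChain_cons_cons.2 ⟨ha, ih⟩

lemma dL_ne_inv (hn : 2 ≤ n) : dL hn ≠ invL (dL hn) := by
  simp [dL, invL]

/-- the base word of length `m` -/
def bw (hn : 2 ≤ n) (m : ℕ) : List (Fin n × Bool) := List.replicate m (dL hn)

lemma red_bw (hn : 2 ≤ n) (m : ℕ) : Red (bw hn m) := red_replicate (dL_ne_inv hn) m

lemma length_bw (hn : 2 ≤ n) (m : ℕ) : (bw hn m).length = m := by simp [bw]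

/-! ### endpoints determine heads and lasts -/

lemma getLast?_eq_sfx {N : ℕ} {v : List (Fin n × Bool)} (hN : 2 ≤ N)
    (h : N - 1 ≤ v.length) : v.getLast? = (sfx N v).getLast? := by
  have hne : sfx N v ≠ [] := by
    have := length_sfx (v := v) h
    intro hc
    rw [hc] at this
    simp at this
    omega
  conv_lhs => rw [← List.take_append_drop (v.length - (N-1)) v]
  rw [List.getLast?_append]
  cases hc : (sfx N v).getLast? with
  | none => exact absurd (List.getLast?_eq_none_iff.1 hc) hne
  | some c =>
    unfold sfx at hc
    rw [hc]
    rfl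

lemma head?_eq_pfx {N : ℕ} {v : List (Fin n × Bool)} (hN : 2 ≤ N)
    (h : N - 1 ≤ v.length) : v.head? = (pfx N v).head? := by
  have hne : pfx N v ≠ [] := by
    have := length_pfx (v := v) h
    intro hc
    rw [hc] at this
    simp at this
    omega
  conv_lhs => rw [← List.take_append_drop (N-1) v]
  rw [List.head?_append]
  cases hc : (pfx N v).head? with
  | none => exact absurd (List.head?_eq_none_iff.1 hc) hne
  | some c =>
    unfold pfx at hc
    rw [hc]
    rfl

/-! ### the cycle formula -/

lemma red_t_tt (hn : 2 ≤ n) {v z : List (Fin n × Bool)} (hv : Red v) (hz : Red z)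
    (hv0 : v ≠ []) (hz0 : z ≠ []) :
    Red (v ++ (KK hn v.getLast? z.head? ++ (z ++ KK hn z.getLast? v.head?))) ∧
    Red ((v ++ (KK hn v.getLast? z.head? ++ (z ++ KK hn z.getLast? v.head?)))
      ++ (v ++ (KK hn v.getLast? z.head? ++ (z ++ KK hn z.getLast? v.head?)))) := by
  set k₁ := KK hn v.getLast? z.head? with hk1
  set k₂ := KK hn z.getLast? v.head? with hk2
  have A1 : Red (v ++ (k₁ ++ z)) := red_glue hn hv hz
  have A2 : Red (z ++ (k₂ ++ v)) := red_glue hn hz hv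
  have A1' : Red ((v ++ k₁) ++ z) := by
    rw [List.append_assoc]
    exact A1
  have A2pre : Red ((z ++ k₂)) := red_of_prefix A2 (by
    rw [← List.append_assoc]
    exact List.prefix_append _ _)
  have ht : Red (v ++ (k₁ ++ (z ++ k₂))) := by
    have := red_overlap A1' A2pre hz0
    simpa [List.append_assoc] using this
  refine ⟨ht, ?_⟩
  have B1 : Red (v ++ (k₁ ++ (z ++ (k₂ ++ v)))) := by
    have := red_overlap A1' A2 hz0
    simpa [List.append_assoc] using this
  have B2 := red_overlap (x := v ++ (k₁ ++ (z ++ k₂))) (y := v) (z := k₁ ++ (z ++ k₂))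
    (by simpa [List.append_assoc] using B1) ht hv0
  simpa [List.append_assoc] using B2

lemma WS_cyc_formula (hn : 2 ≤ n) {N : ℕ} (hN : 2 ≤ N) {D : List (Fin n × Bool) → ℚ}
    {C : ℚ} (hb : ∀ v, Red v → |WS D N v| ≤ C)
    {v z : List (Fin n × Bool)} (hv : Red v) (hz : Red z)
    (hlv : N - 1 ≤ v.length) (hlz : N - 1 ≤ z.length) (hz0 : z ≠ []) :
    WS D N v = -(WS D N (KK hn v.getLast? z.head? ++ (z ++ KK hn z.getLast? v.head?))
      + WS D N (sfx N v ++ pfx N (KK hn v.getLast? z.head?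
          ++ (z ++ KK hn z.getLast? v.head?)))
      + WS D N (sfx N (KK hn v.getLast? z.head? ++ (z ++ KK hn z.getLast? v.head?))
          ++ pfx N v)) := by
  have hv0 : v ≠ [] := by
    intro hc
    rw [hc] at hlv
    simp at hlv
    omega
  set r := KK hn v.getLast? z.head? ++ (z ++ KK hn z.getLast? v.head?) with hrdef
  have hlr : N - 1 ≤ r.length := by
    rw [hrdef]
    simp only [List.length_append, KK_length]
    omega
  obtain ⟨ht, htt⟩ := red_t_tt hn hv hz hv0 hz0
  rw [← hrdef] at ht htt
  have hcyc := cycle_rel (by omega) hb ht htt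
    (fun hc => hv0 (List.append_eq_nil_iff.mp hc).1)
    (by rw [List.length_append]; omega)
  have hsplit := WS_append (D := D) (by omega : 1 ≤ N) hlv hlr
  have hsfx : sfx N (v ++ r) = sfx N r := sfx_append _ hlr
  have hpfx : pfx N (v ++ r) = pfx N v := pfx_append _ hlv
  rw [hsplit, hsfx, hpfx] at hcyc
  linarith

/-- words with the same endpoints have the same window sum -/
lemma WS_eq_of_endpoints (hn : 2 ≤ n) {N : ℕ} (hN : 2 ≤ N) {D : List (Fin n × Bool) → ℚ}
    {C : ℚ} (hb : ∀ v, Red v → |WS D N v| ≤ C)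
    {v₁ v₂ : List (Fin n × Bool)} (h1 : Red v₁) (h2 : Red v₂)
    (hl1 : N - 1 ≤ v₁.length) (hl2 : N - 1 ≤ v₂.length)
    (hp : pfx N v₁ = pfx N v₂) (hs : sfx N v₁ = sfx N v₂) :
    WS D N v₁ = WS D N v₂ := by
  have hlast : v₁.getLast? = v₂.getLast? := by
    rw [getLast?_eq_sfx hN hl1, hs, ← getLast?_eq_sfx hN hl2]
  have hhead : v₁.head? = v₂.head? := by
    rw [head?_eq_pfx hN hl1, hp, ← head?_eq_pfx hN hl2]
  set z := bw hn (N-1) with hzdef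
  have hz : Red z := red_bw hn _
  have hlz : N - 1 ≤ z.length := by rw [hzdef, length_bw]
  have hz0 : z ≠ [] := by
    intro hc
    have := congrArg List.length hc
    rw [hzdef, length_bw] at this
    simp at this
    omega
  have e1 := WS_cyc_formula hn hN hb h1 hz hl1 hlz hz0
  have e2 := WS_cyc_formula hn hN hb h2 hz hl2 hlz hz0
  rw [← hlast, ← hhead] at e2
  rw [e1, e2, hp, hs]

/-! ### the potential and the edge relation -/

/-- the standard word from the base vertex to `u` -/
noncomputable def BB (hn : 2 ≤ n) (N : ℕ) (u : List (Fin n × Bool)) :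
    List (Fin n × Bool) :=
  bw hn (N-1) ++ (KK hn (bw hn (N-1)).getLast? u.head? ++ u)

lemma red_BB (hn : 2 ≤ n) (N : ℕ) {u : List (Fin n × Bool)} (hu : Red u) :
    Red (BB hn N u) := red_glue hn (red_bw hn _) hu

lemma length_BB (hn : 2 ≤ n) (N : ℕ) (u : List (Fin n × Bool)) :
    (BB hn N u).length = (N-1) + 2 + u.length := by
  simp [BB, KK_length, length_bw]
  omega

lemma pfx_BB (hn : 2 ≤ n) {N : ℕ} (hN : 2 ≤ N) (u : List (Fin n × Bool)) :
    pfx N (BB hn N u) = bw hn (N-1) := by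
  unfold BB
  rw [pfx_append _ (by rw [length_bw])]
  unfold pfx
  exact List.take_of_length_le (by rw [length_bw])

lemma sfx_BB (hn : 2 ≤ n) {N : ℕ} (hN : 2 ≤ N) {u : List (Fin n × Bool)}
    (hul : u.length = N - 1) : sfx N (BB hn N u) = u := by
  unfold BB
  rw [sfx_append _ (by rw [List.length_append, KK_length]; omega),
    sfx_append _ (by omega)]
  unfold sfx
  rw [show u.length - (N-1) = 0 from by omega]
  exact List.drop_zero

lemma dropLast_append_getLastD {α : Type*} {l : List α} (h : l ≠ []) (d : α) :
    l.dropLast ++ [l.getLastD d] = l := by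
  rw [List.getLastD_eq_getLast?, List.getLast?_eq_getLast h]
  exact List.dropLast_append_getLast h

/-- the edge relation: the coefficient of an edge is the difference of potentials -/
lemma edge_rel (hn : 2 ≤ n) {N : ℕ} (hN : 2 ≤ N) {D : List (Fin n × Bool) → ℚ}
    {C : ℚ} (hb : ∀ v, Red v → |WS D N v| ≤ C)
    {w : List (Fin n × Bool)} (hw : Red w) (hwl : w.length = N) :
    D w = WS D N (BB hn N w.tail) - WS D N (BB hn N w.dropLast) := by
  set u := w.dropLast with hudef
  set u' := w.tail with hu'def
  have hw0 : w ≠ [] := by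
    intro hc
    rw [hc] at hwl
    simp at hwl
    omega
  have hu : Red u := red_of_prefix hw (List.dropLast_prefix w)
  have hu' : Red u' := red_of_suffix hw (List.tail_suffix w)
  have hul : u.length = N - 1 := by
    rw [hudef, List.length_dropLast, hwl]
  have hu'l : u'.length = N - 1 := by
    rw [hu'def, List.length_tail, hwl]
  have hu0 : u ≠ [] := by
    intro hc
    have := congrArg List.length hc
    rw [hul] at this
    simp at this
    omega
  set gl := w.getLastD (dL hn) with hgldef
  have hsnoc : u ++ [gl] = w := dropLast_append_getLastD hw0 _
  set vstar := BB hn N u ++ [gl] with hvdef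
  have hredv : Red vstar := by
    have h1 : Red ((bw hn (N-1) ++ KK hn (bw hn (N-1)).getLast? u.head?) ++ u) := by
      have := red_BB hn N hu
      unfold BB at this
      simpa [List.append_assoc] using this
    have h2 : Red (u ++ [gl]) := hsnoc ▸ hw
    have := red_overlap h1 h2 hu0
    rw [hvdef]
    unfold BB
    simpa [List.append_assoc] using this
  have hlBB : N - 1 ≤ (BB hn N u).length := by
    rw [length_BB]
    omega
  have hWSv : WS D N vstar = WS D N (BB hn N u) + D w := by
    rw [hvdef, WS_snoc (by omega : 1 ≤ N) hlBB, sfx_BB hn hN hul, hsnoc]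
  have hpfxv : pfx N vstar = bw hn (N-1) := by
    rw [hvdef]
    rw [pfx_append _ hlBB]
    exact pfx_BB hn hN u
  have hsfxv : sfx N vstar = u' := by
    have hv2 : vstar = (bw hn (N-1) ++ KK hn (bw hn (N-1)).getLast? u.head?) ++ w := by
      rw [hvdef]
      unfold BB
      rw [← hsnoc]
      simp [List.append_assoc]
    rw [hv2, sfx_append _ (by omega)]
    unfold sfx
    rw [hwl, show N - (N-1) = 1 from by omega, List.drop_one, hu'def]
  have hends := WS_eq_of_endpoints hn hN hb hredv (red_BB hn N hu')
    (by rw [hvdef, List.length_append, length_BB]; omega)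
    (by rw [length_BB]; omega)
    (by rw [hpfxv, pfx_BB hn hN])
    (by rw [hsfxv, sfx_BB hn hN hu'l])
  rw [hends] at hWSv
  linarith

/-! ### finsets of words -/

def allW (n : ℕ) : ℕ → Finset (List (Fin n × Bool))
  | 0 => {[]}
  | k+1 => (Finset.univ ×ˢ allW n k).image (fun p => p.1 :: p.2)

lemma mem_allW {k : ℕ} {w : List (Fin n × Bool)} : w ∈ allW n k ↔ w.length = k := by
  induction k generalizing w with
  | zero => simp [allW, List.length_eq_zero_iff]
  | succ k ih =>
    simp only [allW, Finset.mem_image, Finset.mem_product, Finset.mem_univ, true_and]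
    constructor
    · rintro ⟨⟨a, t⟩, ht, rfl⟩
      have h2 : t.length = k := ih.1 ht
      simp only [List.length_cons]
      omega
    · intro hw
      rcases w with _ | ⟨a, t⟩
      · simp at hw
      · refine ⟨⟨a, t⟩, ?_, rfl⟩
        simp only [List.length_cons] at hw
        exact ih.2 (by show t.length = k; omega)

lemma headD_cons_tail {w : List (Fin n × Bool)} (hw : w ≠ []) (d : Fin n × Bool) :
    w.headD d :: w.tail = w := by
  cases w with
  | nil => exact absurd rfl hw
  | cons a t => rfl

/-- reindexing : summing over reduced `N`-words equals summing over
(vertex, left-letter) pairs -/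
lemma sum_E_cons (hn : 2 ≤ n) {N : ℕ} (hN : 2 ≤ N) (g : List (Fin n × Bool) → ℚ) :
    ∑ u ∈ (allW n (N-1)).filter Red,
      ∑ s ∈ Finset.univ.filter (fun s => Red (s :: u)), g (s :: u)
    = ∑ w ∈ (allW n N).filter Red, g w := by
  rw [← Finset.sum_sigma ((allW n (N-1)).filter Red)
    (fun u => Finset.univ.filter (fun s => Red (s :: u))) (fun p => g (p.2 :: p.1))]
  apply Finset.sum_nbij' (fun p => p.2 :: p.1) (fun w => ⟨w.tail, w.headD (dL hn)⟩)
  · rintro ⟨u, s⟩ hp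
    simp only [Finset.mem_sigma, Finset.mem_filter, Finset.mem_univ, true_and] at hp
    obtain ⟨⟨hu1, hu2⟩, hs⟩ := hp
    simp only [Finset.mem_filter]
    refine ⟨mem_allW.2 ?_, hs⟩
    simp only [List.length_cons]
    rw [mem_allW.1 hu1]
    omega
  · intro w hw
    simp only [Finset.mem_filter] at hw
    obtain ⟨hw1, hw2⟩ := hw
    have hw0 : w ≠ [] := by
      intro hc
      rw [hc] at hw1
      rw [mem_allW] at hw1
      simp at hw1
      omega
    simp only [Finset.mem_sigma, Finset.mem_filter, Finset.mem_univ, true_and]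
    refine ⟨⟨mem_allW.2 ?_, red_of_suffix hw2 (List.tail_suffix w)⟩, ?_⟩
    · rw [List.length_tail, mem_allW.1 hw1]
    · rw [headD_cons_tail hw0]
      exact hw2
  · rintro ⟨u, s⟩ _
    rfl
  · intro w hw
    simp only [Finset.mem_filter] at hw
    have hw0 : w ≠ [] := by
      intro hc
      rw [hc, mem_allW] at hw
      simp at hw
      omega
    simp only
    exact headD_cons_tail hw0 _
  · rintro ⟨u, s⟩ _
    rfl

lemma sum_E_snoc (hn : 2 ≤ n) {N : ℕ} (hN : 2 ≤ N) (g : List (Fin n × Bool) → ℚ) :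
    ∑ u ∈ (allW n (N-1)).filter Red,
      ∑ s ∈ Finset.univ.filter (fun s => Red (u ++ [s])), g (u ++ [s])
    = ∑ w ∈ (allW n N).filter Red, g w := by
  rw [← Finset.sum_sigma ((allW n (N-1)).filter Red)
    (fun u => Finset.univ.filter (fun s => Red (u ++ [s]))) (fun p => g (p.1 ++ [p.2]))]
  apply Finset.sum_nbij' (fun p => p.1 ++ [p.2]) (fun w => ⟨w.dropLast, w.getLastD (dL hn)⟩)
  · rintro ⟨u, s⟩ hp
    simp only [Finset.mem_sigma, Finset.mem_filter, Finset.mem_univ, true_and] at hp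
    obtain ⟨⟨hu1, hu2⟩, hs⟩ := hp
    simp only [Finset.mem_filter]
    refine ⟨mem_allW.2 ?_, hs⟩
    rw [List.length_append, mem_allW.1 hu1, List.length_singleton]
    omega
  · intro w hw
    simp only [Finset.mem_filter] at hw
    obtain ⟨hw1, hw2⟩ := hw
    have hw0 : w ≠ [] := by
      intro hc
      rw [hc] at hw1
      rw [mem_allW] at hw1
      simp at hw1
      omega
    simp only [Finset.mem_sigma, Finset.mem_filter, Finset.mem_univ, true_and]
    refine ⟨⟨mem_allW.2 ?_, red_of_prefix hw2 (List.dropLast_prefix w)⟩, ?_⟩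
    · rw [List.length_dropLast, mem_allW.1 hw1]
    · rw [dropLast_append_getLastD hw0]
      exact hw2
  · rintro ⟨u, s⟩ _
    apply Sigma.ext
    · simp [List.dropLast_concat]
    · simp only [List.dropLast_concat]
      rw [List.getLastD_eq_getLast?, List.getLast?_concat]
      rfl
  · intro w hw
    simp only [Finset.mem_filter] at hw
    have hw0 : w ≠ [] := by
      intro hc
      rw [hc, mem_allW] at hw
      simp at hw
      omega
    simp only
    exact dropLast_append_getLastD hw0 _
  · rintro ⟨u, s⟩ _
    rfl

/-- The homogeneous core: a combination of counting functions of words of one fixed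
length `N ≥ 2`, bounded on reduced words, lies in the span of the relations. -/
lemma homog_core (hn : 2 ≤ n) {N : ℕ} (hN : 2 ≤ N) {h : List (Fin n × Bool) → ℚ}
    (hmem : h ∈ Submodule.span ℚ
      ({g : List (Fin n × Bool) → ℚ | ∃ u, Red u ∧ u.length = N ∧ g = cnt u}))
    (hbd : h ∈ Bdd n) : h ∈ Submodule.span ℚ (Gens n) := by
  have hset : {g : List (Fin n × Bool) → ℚ | ∃ u, Red u ∧ u.length = N ∧ g = cnt u}
      = {g : List (Fin n × Bool) → ℚ | ∃ u, (Red u ∧ u.length = N) ∧ g = cnt u} := by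
    ext g
    simp [and_assoc]
  rw [hset] at hmem
  obtain ⟨F, c, hF, rfl⟩ := span_cnt_rep hmem
  set D : List (Fin n × Bool) → ℚ := fun w => if w ∈ F then c w else 0 with hDdef
  -- the function is the window sum of D
  have hwin : ∀ v, (∑ w ∈ F, c w * cnt w v) = WS D N v := by
    intro v
    have hterm : ∀ w ∈ F, c w * cnt w v
        = ∑ i ∈ Finset.range (v.length + 1 - N),
            (if (v.drop i).take N = w then c w else 0) := by
      intro w hw
      obtain ⟨hwr, hwl⟩ := hF w hw
      have hw0 : w ≠ [] := by
        intro hc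
        rw [hc] at hwl
        simp at hwl
        omega
      rw [cnt_ne_nil hw0, occ_window hwl v]
      push_cast
      rw [Finset.mul_sum]
      refine Finset.sum_congr rfl fun i _ => ?_
      split <;> ring
    rw [Finset.sum_congr rfl hterm, Finset.sum_comm]
    unfold WS
    refine Finset.sum_congr rfl fun i _ => ?_
    rw [hDdef]
    simp only
    rw [Finset.sum_ite_eq]
  obtain ⟨C, hC⟩ := hbd
  have hb : ∀ v, Red v → |WS D N v| ≤ C := by
    intro v hv
    rw [← hwin v]
    exact hC v hv
  -- the potential
  set φ : List (Fin n × Bool) → ℚ := fun u => WS D N (BB hn N u) with hφdef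
  set V := (allW n (N-1)).filter Red with hVdef
  set E := (allW n N).filter Red with hEdef
  have hFE : F ⊆ E := by
    intro w hw
    obtain ⟨hwr, hwl⟩ := hF w hw
    rw [hEdef, Finset.mem_filter]
    exact ⟨mem_allW.2 hwl, hwr⟩
  have hkey : (fun v => ∑ w ∈ F, c w * cnt w v)
      = ∑ u ∈ V, φ u • ((rgrp u) - (lgrp u)) := by
    funext v
    have hhv : (∑ w ∈ F, c w * cnt w v) = ∑ w ∈ E, D w * cnt w v := by
      calc ∑ w ∈ F, c w * cnt w v = ∑ w ∈ F, D w * cnt w v :=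
            Finset.sum_congr rfl (fun w hw => by simp [hDdef, if_pos hw])
        _ = ∑ w ∈ E, D w * cnt w v :=
            Finset.sum_subset hFE (fun w _ hwF => by simp [hDdef, if_neg hwF])
    have hrl : ∀ u, (rgrp u - lgrp u) v
        = (∑ s ∈ Finset.univ.filter (fun s => Red (s :: u)), cnt (s :: u) v)
          - (∑ s ∈ Finset.univ.filter (fun s => Red (u ++ [s])), cnt (u ++ [s]) v) := by
      intro u
      simp only [Pi.sub_apply]
      unfold rgrp lgrp
      ring
    have hRHS : (∑ u ∈ V, φ u • ((rgrp u) - (lgrp u))) v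
        = (∑ w ∈ E, φ w.tail * cnt w v) - (∑ w ∈ E, φ w.dropLast * cnt w v) := by
      rw [Finset.sum_apply]
      have : ∀ u ∈ V, (φ u • ((rgrp u) - (lgrp u))) v
          = (∑ s ∈ Finset.univ.filter (fun s => Red (s :: u)), φ u * cnt (s :: u) v)
            - (∑ s ∈ Finset.univ.filter (fun s => Red (u ++ [s])), φ u * cnt (u ++ [s]) v) := by
        intro u _
        rw [Pi.smul_apply, smul_eq_mul, hrl u, mul_sub, Finset.mul_sum, Finset.mul_sum]
      rw [Finset.sum_congr rfl this, Finset.sum_sub_distrib]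
      congr 1
      · exact sum_E_cons hn hN (fun w => φ w.tail * cnt w v)
      · rw [← sum_E_snoc hn hN (fun w => φ w.dropLast * cnt w v)]
        refine Finset.sum_congr rfl fun u _ => Finset.sum_congr rfl fun s _ => ?_
        rw [List.dropLast_concat]
    rw [hhv, hRHS, ← Finset.sum_sub_distrib]
    refine Finset.sum_congr rfl fun w hw => ?_
    rw [hEdef, Finset.mem_filter] at hw
    have hedge := edge_rel hn hN hb hw.2 (mem_allW.1 hw.1)
    rw [hedge]
    simp only [hφdef]
    ring
  rw [hkey]
  refine Submodule.sum_mem _ fun u hu => Submodule.smul_mem _ _ ?_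
  rw [hVdef, Finset.mem_filter] at hu
  exact Submodule.sub_mem _ (rgrp_mem_span hu.2) (lgrp_mem_span hu.2)

/-- The core lemma: an element of the span of counting functions which is bounded on
reduced words lies in the span of the relations. -/
lemma core_lemma (hn : 2 ≤ n) {g : List (Fin n × Bool) → ℚ}
    (hg : g ∈ SpanC n) (hb : g ∈ Bdd n) : g ∈ Submodule.span ℚ (Gens n) := by
  obtain ⟨F, c, hF, rfl⟩ := span_cnt_rep hg
  set N := F.sup List.length + 2 with hNdef
  have hhom : (fun v => ∑ w ∈ F, c w * cnt w v) ∈ Submodule.span ℚ (LP n N) := by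
    have hfun : (fun v => ∑ w ∈ F, c w * cnt w v) = ∑ w ∈ F, c w • cnt w := by
      funext v
      simp only [Finset.sum_apply, Pi.smul_apply, smul_eq_mul]
    rw [hfun]
    refine Submodule.sum_mem _ fun w hw => Submodule.smul_mem _ _ ?_
    refine cnt_mem_homog (N - w.length) w (hF w hw) ?_
    have : w.length ≤ F.sup List.length := Finset.le_sup hw
    omega
  rw [LP, Submodule.span_union, Submodule.mem_sup] at hhom
  obtain ⟨gl, hgl, hh, hhmem, heq⟩ := hhom
  have hglB : gl ∈ Bdd n := by
    refine Submodule.span_le.2 ?_ hgl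
    rintro x ⟨u, hu, rfl⟩
    exact lgrp_mem_Bdd u
  have hhB : hh ∈ Bdd n := by
    have : hh = (fun v => ∑ w ∈ F, c w * cnt w v) - gl := by
      rw [← heq]; abel
    rw [this]
    exact Submodule.sub_mem _ hb hglB
  have hglG : gl ∈ Submodule.span ℚ (Gens n) := by
    refine Submodule.span_le.2 ?_ hgl
    rintro x ⟨u, hu, rfl⟩
    exact lgrp_mem_span hu
  have hhG : hh ∈ Submodule.span ℚ (Gens n) :=
    homog_core hn (by omega) hhmem hhB
  rw [← heq]
  exact Submodule.add_mem _ hglG hhG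

/-! ### forward direction -/

lemma forward_dir (hn : 2 ≤ n) {f : List (Fin n × Bool) → ℚ}
    (hf : f ∈ SpanC n) (hb : ∃ C : ℚ, ∀ v, Red v → |sig1 f v| ≤ C) :
    f ∈ Submodule.span ℚ (Gens n) := by
  obtain ⟨F, c, hF, rfl⟩ := span_cnt_rep hf
  set f : List (Fin n × Bool) → ℚ := fun v => ∑ w ∈ F, c w * cnt w v with hfdef
  have hsig : ∀ v, sig1 f v = ∑ w ∈ F, c w * (cnt w v - cnt (invW w) v) := by
    intro v
    simp only [sig1, hfdef]
    rw [← Finset.sum_sub_distrib]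
    refine Finset.sum_congr rfl fun w hw => ?_
    rw [cnt_invW]
    ring
  have hdecomp : f = (∑ w ∈ F, (c w / 2) • (fun v => cnt w v + cnt (invW w) v))
      + (2⁻¹ : ℚ) • sig1 f := by
    funext v
    simp only [Pi.add_apply, Pi.smul_apply, Finset.sum_apply, smul_eq_mul, hsig v]
    simp only [hfdef]
    rw [Finset.mul_sum, ← Finset.sum_add_distrib]
    refine Finset.sum_congr rfl fun w hw => ?_
    ring
  have hsymG : (∑ w ∈ F, (c w / 2) • (fun v => cnt w v + cnt (invW w) v))
      ∈ Submodule.span ℚ (Gens n) := by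
    refine Submodule.sum_mem _ fun w hw => Submodule.smul_mem _ _ ?_
    exact Submodule.subset_span (Or.inl ⟨w, hF w hw, rfl⟩)
  have hsigC : sig1 f ∈ SpanC n := by
    have hfun : sig1 f = (fun v => ∑ w ∈ F, c w * cnt w v)
        - (fun v => ∑ w ∈ F, c w * cnt (invW w) v) := by
      funext v
      simp only [Pi.sub_apply, hsig v, ← Finset.sum_sub_distrib]
      refine Finset.sum_congr rfl fun w hw => ?_
      ring
    rw [hfun]
    refine Submodule.sub_mem _ ?_ ?_
    · have : (fun v => ∑ w ∈ F, c w * cnt w v) = ∑ w ∈ F, c w • cnt w := by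
        funext v
        simp [Finset.sum_apply]
      rw [this]
      exact Submodule.sum_mem _ fun w hw => Submodule.smul_mem _ _ (cnt_mem_SpanC (hF w hw))
    · have : (fun v => ∑ w ∈ F, c w * cnt (invW w) v) = ∑ w ∈ F, c w • cnt (invW w) := by
        funext v
        simp [Finset.sum_apply]
      rw [this]
      exact Submodule.sum_mem _ fun w hw =>
        Submodule.smul_mem _ _ (cnt_mem_SpanC (red_invW (hF w hw)))
  have hsigB : sig1 f ∈ Bdd n := hb
  have hsigG : sig1 f ∈ Submodule.span ℚ (Gens n) := core_lemma hn hsigC hsigB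
  rw [hdecomp]
  exact Submodule.add_mem _ hsymG (Submodule.smul_mem _ _ hsigG)


end S19

/-- The kernel K_Br of σ = σ₂ ∘ σ₁ (counting functions f with σ₁ f bounded on F_n)
is spanned by the symmetry relations s_w = p_w + p_{w⁻¹} and the symmetrized extension
relations se_w = l_w - r_{w⁻¹}, over all reduced words w. -/
theorem stmt_19 (n : ℕ) (hn : 2 ≤ n) (f : List (Fin n × Bool) → ℚ) :
    (f ∈ Submodule.span ℚ {g : List (Fin n × Bool) → ℚ | ∃ w, Red w ∧ g = cnt w} ∧
      ∃ C : ℚ, ∀ v : List (Fin n × Bool), Red v → |sig1 f v| ≤ C) ↔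
    f ∈ Submodule.span ℚ
      ({g : List (Fin n × Bool) → ℚ | ∃ w, Red w ∧
          g = fun v => cnt w v + cnt (invW w) v} ∪
       {g : List (Fin n × Bool) → ℚ | ∃ w, Red w ∧
          g = fun v => lgrp w v - rgrp (invW w) v}) := by
  constructor
  · rintro ⟨h1, h2⟩
    exact S19.forward_dir hn h1 h2
  · intro h
    exact S19.backward_dir h
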